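/- For every α ∈ (0,1) there exists a constant c_α ∈ (0,∞), depending only on α, with the following property. Let (F,d) be a nonempty compact metric space, let (Ω,𝓕,P) be a probability space, and let (G(x))_{x∈F} be a family of real random variables on Ω such that for all x, y ∈ F the law of G(x) − G(y) is the Gaussian distribution on ℝ with mean 0 and variance d(x,y)² (a point mass at 0 when x = y). Then there exists a countable dense subset D of F such that, for every n ≥ 0, P( sup{ |G(x) − G(y)| : x,y ∈ D, d(x,y) < 2^{-n+1} } > c_α · 2^{-(1−α)n} ) ≤ Σ_{k≥n} (k+1)² · N_d(F, 2^{-k})² · exp( −2^{2α(k−3)} ). -/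

import Mathlib

open MeasureTheory Filter Set ProbabilityTheory
open scoped ENNReal NNReal Topology

universe u v

/-- The metric entropy `N_d(K, ε)` of a subset `K` of a metric space: the minimal cardinality
of a finite subset `A ⊆ K` such that every point of `K` is within distance `ε` of `A`. -/
noncomputable def coveringNumber {S : Type*} [MetricSpace S] (K : Set S) (ε : ℝ) : ℕ :=
  sInf {n : ℕ | ∃ A : Finset S, ↑A ⊆ K ∧ A.card = n ∧ ∀ x ∈ K, ∃ a ∈ A, dist x a ≤ ε}

section Aux

lemma gaussPDFReal_bound {v : ℝ≥0} (hv : v ≠ 0) {t w : ℝ} (ht : 0 < t) (hw : (v:ℝ) ≤ w)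
    {x : ℝ} (hx : t < |x|) :
    gaussianPDFReal 0 v x ≤ Real.exp (-(t^2) / (2*w)) *
      (gaussianPDFReal 0 v (x - t) + gaussianPDFReal 0 v (x + t)) := by
  have hv' : (0:ℝ) < v := lt_of_le_of_ne (v.coe_nonneg) (by exact_mod_cast (Ne.symm hv))
  have hw' : (0:ℝ) < w := lt_of_lt_of_le hv' hw
  have key : ∀ y : ℝ, t^2 + y^2 ≤ x^2 →
      gaussianPDFReal 0 v x ≤ Real.exp (-(t^2) / (2*w)) * gaussianPDFReal 0 v y := by
    intro y hy
    simp only [gaussianPDFReal, sub_zero]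
    rw [mul_comm (Real.exp _), mul_assoc ((√(2 * Real.pi * v))⁻¹), ← Real.exp_add]
    gcongr (√(2 * Real.pi * v))⁻¹ * ?_
    rw [Real.exp_le_exp]
    have h1 : -x^2 / (2*(v:ℝ)) ≤ -y^2 / (2*v) + -(t^2)/(2*v) := by
      rw [← add_div, div_le_div_iff₀ (by positivity) (by positivity)]
      nlinarith
    have h2 : -(t^2)/(2*(v:ℝ)) ≤ -(t^2)/(2*w) := by
      rw [neg_div, neg_div, neg_le_neg_iff]
      gcongr
    linarith
  rcases lt_abs.mp hx with h | h
  · have := key (x - t) (by nlinarith)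
    refine this.trans ?_
    have := gaussianPDFReal_nonneg 0 v (x + t)
    nlinarith [Real.exp_pos (-(t^2)/(2*w))]
  · have := key (x + t) (by nlinarith)
    refine this.trans ?_
    have := gaussianPDFReal_nonneg 0 v (x - t)
    nlinarith [Real.exp_pos (-(t^2)/(2*w))]

lemma gauss_tail (v : ℝ≥0) {t w : ℝ} (ht : 0 < t) (hw : 0 < w) (hvw : (v:ℝ) ≤ w) :
    gaussianReal 0 v {x | t < |x|} ≤ ENNReal.ofReal (2 * Real.exp (-(t^2) / (2*w))) := by
  have hs : MeasurableSet {x : ℝ | t < |x|} := measurableSet_lt measurable_const (measurable_id.abs)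
  by_cases hv : v = 0
  · subst hv
    rw [gaussianReal_zero_var, Measure.dirac_apply' _ hs]
    simp only [Set.indicator_apply, Set.mem_setOf_eq, abs_zero]
    rw [if_neg (by simpa using ht.le)]
    positivity
  · rw [gaussianReal_of_var_ne_zero _ hv, withDensity_apply _ hs]
    have hb : ∫⁻ x in {x : ℝ | t < |x|}, gaussianPDF 0 v x ≤
        ∫⁻ x, ENNReal.ofReal (Real.exp (-(t^2)/(2*w))) *
          (gaussianPDF 0 v (x - t) + gaussianPDF 0 v (x + t)) := by
      refine (setLIntegral_mono' hs ?_).trans (setLIntegral_le_lintegral _ _)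
      intro x hx
      rw [gaussianPDF, gaussianPDF, gaussianPDF, ← ENNReal.ofReal_add
        (gaussianPDFReal_nonneg _ _ _) (gaussianPDFReal_nonneg _ _ _), ← ENNReal.ofReal_mul
        (Real.exp_nonneg _)]
      exact ENNReal.ofReal_le_ofReal (gaussPDFReal_bound hv ht hvw hx)
    refine hb.trans ?_
    have hm1 : Measurable fun x : ℝ => gaussianPDF 0 v (x - t) :=
      (measurable_gaussianPDF 0 v).comp (measurable_id.sub_const t)
    have hm2 : Measurable fun x : ℝ => gaussianPDF 0 v (x + t) :=
      (measurable_gaussianPDF 0 v).comp (measurable_id.add_const t)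
    rw [lintegral_const_mul (f := fun x => gaussianPDF 0 v (x - t) + gaussianPDF 0 v (x + t)) _ (hm1.add hm2)]
    have h1 : ∫⁻ x, gaussianPDF 0 v (x - t) = 1 := by
      rw [(measurePreserving_sub_right volume t).lintegral_comp (measurable_gaussianPDF 0 v)]
      exact lintegral_gaussianPDF_eq_one 0 hv
    have h2 : ∫⁻ x, gaussianPDF 0 v (x + t) = 1 := by
      rw [(measurePreserving_add_right volume t).lintegral_comp (measurable_gaussianPDF 0 v)]
      exact lintegral_gaussianPDF_eq_one 0 hv
    rw [lintegral_add_left hm1, h1, h2,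
      ENNReal.ofReal_mul (by norm_num)]
    rw [mul_comm]
    gcongr
    rw [ENNReal.ofReal_ofNat]
    norm_num

lemma exists_net {F : Type*} [MetricSpace F] [CompactSpace F] {ε : ℝ} (hε : 0 < ε) :
    ∃ A : Finset F, A.card = coveringNumber (Set.univ : Set F) ε ∧
      ∀ x : F, ∃ a ∈ A, dist x a ≤ ε := by
  have hne : {n : ℕ | ∃ A : Finset F, ↑A ⊆ (Set.univ : Set F) ∧ A.card = n ∧
      ∀ x ∈ (Set.univ : Set F), ∃ a ∈ A, dist x a ≤ ε}.Nonempty := by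
    obtain ⟨t, -, htf, hcov⟩ := totallyBounded_iff_subset.mp isCompact_univ.totallyBounded
      {p : F × F | dist p.1 p.2 < ε} (Metric.dist_mem_uniformity hε)
    refine ⟨htf.toFinset.card, htf.toFinset, by simp, rfl, fun x _ => ?_⟩
    obtain ⟨y, hy, hxy⟩ := Set.mem_iUnion₂.mp (hcov (Set.mem_univ x))
    exact ⟨y, htf.mem_toFinset.mpr hy, le_of_lt hxy⟩
  obtain ⟨A, -, hcard, hcov⟩ := Nat.sInf_mem hne
  exact ⟨A, hcard, fun x => hcov x (Set.mem_univ x)⟩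

lemma coveringNumber_antitone {F : Type*} [MetricSpace F] [CompactSpace F] {ε ε' : ℝ}
    (hε : 0 < ε) (h : ε ≤ ε') :
    coveringNumber (Set.univ : Set F) ε' ≤ coveringNumber (Set.univ : Set F) ε := by
  obtain ⟨A, hcard, hcov⟩ := exists_net (F := F) hε
  exact Nat.sInf_le ⟨A, Set.subset_univ _, hcard, fun x _ =>
    (hcov x).imp (fun a ⟨ha, hd⟩ => ⟨ha, hd.trans h⟩)⟩

/-- numerical tail comparison -/
lemma tail_num {α : ℝ} (hα0 : 0 < α) (hα1 : α < 1) (k : ℕ) :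
    2 * Real.exp (-((8 * (2:ℝ) ^ (-((1 - α) * (k:ℝ))))^2) / (2 * (4 * (2:ℝ)^(-(k:ℤ)))^2))
      ≤ Real.exp (-(2:ℝ) ^ (2 * α * ((k:ℝ) - 3))) := by
  have h2 : (0:ℝ) < 2 := two_pos
  set X : ℝ := (2:ℝ) ^ (α * (k:ℝ)) with hX
  have hXpos : 0 < X := Real.rpow_pos_of_pos h2 _
  have hX1 : 1 ≤ X := by
    rw [hX, ← Real.rpow_zero 2]
    exact Real.rpow_le_rpow_of_exponent_le one_le_two (by positivity)
  set Y : ℝ := (2:ℝ) ^ (-(k:ℝ)) with hY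
  have hYpos : 0 < Y := Real.rpow_pos_of_pos h2 _
  have hzr : (2:ℝ)^(-(k:ℤ)) = Y := by
    rw [hY, ← Real.rpow_intCast 2 (-(k:ℤ))]
    norm_num
  have hτ : (2:ℝ) ^ (-((1 - α) * (k:ℝ))) = X * Y := by
    rw [hX, hY, ← Real.rpow_add h2]
    congr 1
    ring
  have hZ : (2:ℝ) ^ (2 * α * ((k:ℝ) - 3)) ≤ X ^ 2 := by
    have : X ^ 2 = (2:ℝ) ^ (α * (k:ℝ) * 2) := by
      rw [hX, ← Real.rpow_natCast ((2:ℝ) ^ (α * (k:ℝ))) 2, ← Real.rpow_mul h2.le]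
      norm_num
    rw [this]
    refine Real.rpow_le_rpow_of_exponent_le one_le_two ?_
    nlinarith
  have hZpos : 0 < (2:ℝ) ^ (2 * α * ((k:ℝ) - 3)) := Real.rpow_pos_of_pos h2 _
  rw [hzr, hτ]
  have hexp : -((8 * (X * Y))^2) / (2 * (4 * Y)^2) = -(2 * X^2) := by
    field_simp
    ring
  rw [hexp]
  have key : 2 ≤ Real.exp (2 * X^2 - (2:ℝ) ^ (2 * α * ((k:ℝ) - 3))) := by
    have h1 : (1:ℝ) ≤ 2 * X^2 - (2:ℝ) ^ (2 * α * ((k:ℝ) - 3)) := by nlinarith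
    calc (2:ℝ) ≤ 1 + 1 + 1^2/2 := by norm_num
    _ ≤ Real.exp 1 := by
        have := Real.add_one_le_exp (1:ℝ)
        nlinarith [Real.exp_pos (1:ℝ), Real.quadratic_le_exp_of_nonneg (zero_le_one)]
    _ ≤ _ := Real.exp_le_exp.mpr h1
  calc 2 * Real.exp (-(2 * X ^ 2))
      ≤ Real.exp (2 * X^2 - (2:ℝ) ^ (2 * α * ((k:ℝ) - 3))) * Real.exp (-(2 * X^2)) := by
        gcongr
    _ = Real.exp (-(2:ℝ) ^ (2 * α * ((k:ℝ) - 3))) := by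
        rw [← Real.exp_add]; ring_nf

end Aux

/-- (Lemma: equicontinuity of Gaussian processes.) For every `α ∈ (0,1)` there is a constant
`c_α > 0` depending only on `α` such that: for any nonempty compact metric space `(F,d)` and
any mean-zero Gaussian process `(G(x))_{x ∈ F}` whose natural pseudometric coincides with `d`
(i.e. `G(x) - G(y)` is Gaussian with mean `0` and variance `d(x,y)²`), there is a countable
dense `D ⊆ F` so that for every `n ≥ 0`,
`P( sup_{x,y ∈ D, d(x,y) < 2^{-n+1}} |G(x) - G(y)| > c_α 2^{-(1-α)n} )
  ≤ Σ_{k ≥ n} (k+1)² N_d(F, 2^{-k})² exp(-2^{2α(k-3)})`. -/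
theorem stmt10 (α : ℝ) (hα : α ∈ Set.Ioo (0 : ℝ) 1) :
    ∃ c : ℝ, 0 < c ∧
      ∀ (F : Type u) (_ : MetricSpace F) (_ : CompactSpace F) (_ : Nonempty F)
        (Ω : Type v) (_ : MeasurableSpace Ω) (P : Measure Ω) (_ : IsProbabilityMeasure P)
        (G : F → Ω → ℝ),
        (∀ x y : F, Measure.map (fun ω => G x ω - G y ω) P
            = gaussianReal 0 ((dist x y ^ 2).toNNReal)) →
        ∃ D : Set F, D.Countable ∧ Dense D ∧ ∀ n : ℕ,
          P {ω | ∃ x ∈ D, ∃ y ∈ D,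
              dist x y < (2 : ℝ) ^ (1 - (n : ℤ)) ∧
              c * (2 : ℝ) ^ (-((1 - α) * (n : ℝ))) < |G x ω - G y ω|} ≤
            ∑' k : ℕ,
              (((n + k : ℕ) + 1 : ℝ≥0∞) ^ 2) *
                ((coveringNumber (Set.univ : Set F)
                  ((2 : ℝ) ^ (-((n + k : ℕ) : ℤ))) : ℝ≥0∞)) ^ 2 *
                ENNReal.ofReal (Real.exp (-(2 : ℝ) ^ (2 * α * (((n + k : ℕ) : ℝ) - 3)))) := by
  classical
  obtain ⟨hα0, hα1⟩ := hα
  set r : ℝ := (2:ℝ) ^ (α - 1) with hr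
  have hr0 : 0 < r := Real.rpow_pos_of_pos two_pos _
  have hr1 : r < 1 := Real.rpow_lt_one_of_one_lt_of_neg one_lt_two (by linarith)
  have h1r : 0 < 1 - r := by linarith
  refine ⟨24 / (1 - r), by positivity, ?_⟩
  intro F _ _ _ Ω _ P _ G hmap
  -- AEMeasurability of differences
  have hAE : ∀ x y : F, AEMeasurable (fun ω => G x ω - G y ω) P := by
    intro x y
    by_contra h
    have h0 := hmap x y
    rw [Measure.map_of_not_aemeasurable h] at h0
    have := congrArg (fun μ : Measure ℝ => μ Set.univ) h0
    simp [measure_univ] at this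
  -- nets
  have hnet : ∀ k : ℕ, ∃ A : Finset F, A.card = coveringNumber (Set.univ : Set F) ((2:ℝ)^(-(k:ℤ)))
      ∧ ∀ x : F, ∃ a ∈ A, dist x a ≤ (2:ℝ)^(-(k:ℤ)) := fun k => exists_net (by positivity)
  choose A hAcard hAcov using hnet
  choose π hπmem hπdist using hAcov
  set D : Set F := ⋃ k, (A k : Set F) with hD
  have hDc : D.Countable := countable_iUnion fun k => (A k).countable_toSet
  have hDd : Dense D := by
    rw [Metric.dense_iff]
    intro x ρ hρ
    obtain ⟨k, hk⟩ := exists_pow_lt_of_lt_one hρ (by norm_num : (1:ℝ)/2 < 1)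
    refine ⟨π k x, Metric.mem_ball.mpr ?_, Set.mem_iUnion.mpr ⟨k, hπmem k x⟩⟩
    rw [dist_comm]
    refine lt_of_le_of_lt (hπdist k x) (lt_of_le_of_lt (le_of_eq ?_) hk)
    rw [one_div, inv_pow, ← zpow_natCast (2:ℝ) k, ← zpow_neg]
  refine ⟨D, hDc, hDd, fun n => ?_⟩
  -- notation
  set N : ℕ → ℕ := fun k => coveringNumber (Set.univ : Set F) ((2:ℝ)^(-(k:ℤ))) with hN
  set τ : ℕ → ℝ := fun k => 8 * (2:ℝ) ^ (-((1 - α) * (k:ℝ))) with hτ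
  have hτpos : ∀ k, 0 < τ k := fun k => by positivity
  set Bf : ℕ → Finset F := fun k => (Finset.range (k+1)).biUnion A with hBf
  have hBmono : ∀ k, Bf k ⊆ Bf (k+1) := by
    intro k
    exact Finset.biUnion_subset_biUnion_of_subset_left _
      (Finset.range_subset_range.mpr (Nat.le_succ _))
  have hABf : ∀ m k, m ≤ k → ∀ a ∈ A m, a ∈ Bf k := by
    intro m k hmk a ha
    exact Finset.mem_biUnion.mpr ⟨m, Finset.mem_range.mpr (Nat.lt_succ_of_le hmk), ha⟩
  have hBcard : ∀ k, (Bf k).card ≤ (k+1) * N k := by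
    intro k
    refine Finset.card_biUnion_le.trans ?_
    calc ∑ m ∈ Finset.range (k+1), (A m).card ≤ ∑ m ∈ Finset.range (k+1), N k := by
          refine Finset.sum_le_sum fun m hm => ?_
          rw [hAcard]
          exact coveringNumber_antitone (by positivity)
            (zpow_le_zpow_right₀ one_le_two
              (neg_le_neg (by exact_mod_cast Nat.le_of_lt_succ (Finset.mem_range.mp hm))))
      _ = (k+1) * N k := by rw [Finset.sum_const, Finset.card_range, smul_eq_mul]
  -- the elementary events
  set Sev : F → F → ℕ → Set Ω := fun a b k =>
    {ω | dist a b ≤ 4 * (2:ℝ)^(-(k:ℤ)) ∧ τ k < |G a ω - G b ω|} with hSev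
  set E : ℕ → Set Ω := fun j => ⋃ a ∈ Bf (n+j), ⋃ b ∈ Bf (n+j), Sev a b (n+j) with hE
  -- Step 1 : inclusion
  have hincl : {ω | ∃ x ∈ D, ∃ y ∈ D,
      dist x y < (2 : ℝ) ^ (1 - (n : ℤ)) ∧
      24 / (1-r) * (2 : ℝ) ^ (-((1 - α) * (n : ℝ))) < |G x ω - G y ω|} ⊆ ⋃ j, E j := by
    intro ω hω
    obtain ⟨x, hxD, y, hyD, hxy, hbig⟩ := hω
    by_contra hnot
    have hgood : ∀ k, n ≤ k → ∀ a ∈ Bf k, ∀ b ∈ Bf k,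
        dist a b ≤ 4 * (2:ℝ)^(-(k:ℤ)) → |G a ω - G b ω| ≤ τ k := by
      intro k hk a ha b hb hd
      by_contra hlt
      have hkn : n + (k - n) = k := Nat.add_sub_cancel' hk
      refine hnot (Set.mem_iUnion.mpr ⟨k - n, ?_⟩)
      rw [hE]
      dsimp only
      rw [hkn]
      exact Set.mem_iUnion₂.mpr ⟨a, ha, Set.mem_iUnion₂.mpr ⟨b, hb, hd, not_le.mp hlt⟩⟩
    have hchain : ∀ z : F, z ∈ D → ∃ w ∈ Bf n, dist z w ≤ (2:ℝ)^(-(n:ℤ)) ∧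
        |G z ω - G w ω| ≤ 8 * (2:ℝ)^(-((1-α)*(n:ℝ))) * r * (1-r)⁻¹ := by
      intro z hzD
      obtain ⟨mz, hz⟩ := Set.mem_iUnion.mp hzD
      set q : ℕ → F := fun k => if mz ≤ k then z else π k z with hq
      have hqmem : ∀ k, q k ∈ Bf k := by
        intro k
        by_cases h : mz ≤ k
        · simp only [hq, if_pos h]; exact hABf mz k h z hz
        · simp only [hq, if_neg h]; exact hABf k k le_rfl _ (hπmem k z)
      have hqdist : ∀ k, dist z (q k) ≤ (2:ℝ)^(-(k:ℤ)) := by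
        intro k
        by_cases h : mz ≤ k
        · simp only [hq, if_pos h, dist_self]; positivity
        · simp only [hq, if_neg h]; exact hπdist k z
      have hdouble : ∀ M : ℕ, (2:ℝ)^(-((n+M:ℕ):ℤ)) = 2 * (2:ℝ)^(-((n+M+1:ℕ):ℤ)) := by
        intro M
        rw [show (-((n+M+1:ℕ):ℤ)) = -((n+M:ℕ):ℤ) + (-1) by push_cast; ring,
          zpow_add₀ (two_ne_zero (α := ℝ))]
        simp only [zpow_neg_one]
        push_cast
        ring
      have hlink : ∀ M : ℕ, |G (q (n+M+1)) ω - G (q (n+M)) ω| ≤ τ (n+M+1) := by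
        intro M
        refine hgood (n+M+1) (by omega) _ (hqmem (n+M+1)) _ (hBmono (n+M) (hqmem (n+M))) ?_
        have h1 : dist (q (n+M+1)) (q (n+M)) ≤ dist z (q (n+M+1)) + dist z (q (n+M)) := by
          rw [dist_comm z (q (n+M+1))]
          exact dist_triangle _ _ _
        have h2 := hqdist (n+M+1)
        have h3 := (hqdist (n+M)).trans_eq (hdouble M)
        have h4 : (0:ℝ) < (2:ℝ)^(-((n+M+1:ℕ):ℤ)) := by positivity
        have : ((n:ℤ)+(M:ℤ)+1) = ((n+M+1:ℕ):ℤ) := by push_cast; ring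
        push_cast at h1 h2 h3 h4 ⊢
        linarith
      have hsum : ∀ M : ℕ, |G (q (n+M)) ω - G (q n) ω| ≤ ∑ i ∈ Finset.range M, τ (n+i+1) := by
        intro M
        induction M with
        | zero => simp
        | succ M ih =>
          have habss : |G (q (n+(M+1))) ω - G (q n) ω| ≤
              |G (q (n+M+1)) ω - G (q (n+M)) ω| + |G (q (n+M)) ω - G (q n) ω| := by
            have := abs_sub_le (G (q (n+M+1)) ω) (G (q (n+M)) ω) (G (q n) ω)
            simpa [show n+(M+1) = n+M+1 by ring] using this
          refine habss.trans ?_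
          rw [Finset.sum_range_succ]
          have := hlink M
          linarith [add_le_add (hlink M) ih]
      have hterm : ∀ i : ℕ, τ (n+i+1) = 8 * (2:ℝ)^(-((1-α)*(n:ℝ))) * r * r^i := by
        intro i
        rw [hτ]
        dsimp only
        rw [hr, ← Real.rpow_natCast ((2:ℝ)^(α-1)) i, ← Real.rpow_mul (by norm_num : (0:ℝ) ≤ 2),
          mul_assoc, mul_assoc]
        rw [← Real.rpow_add two_pos, ← Real.rpow_add two_pos]
        congr 1
        push_cast
        ring
      have hgeom : ∑ i ∈ Finset.range mz, τ (n+i+1) ≤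
          8 * (2:ℝ)^(-((1-α)*(n:ℝ))) * r * (1-r)⁻¹ := by
        calc ∑ i ∈ Finset.range mz, τ (n+i+1)
            = 8 * (2:ℝ)^(-((1-α)*(n:ℝ))) * r * ∑ i ∈ Finset.range mz, r^i := by
              rw [Finset.mul_sum]
              exact Finset.sum_congr rfl fun i _ => hterm i
          _ ≤ 8 * (2:ℝ)^(-((1-α)*(n:ℝ))) * r * (1-r)⁻¹ := by
              have hg : ∑ i ∈ Finset.range mz, r^i ≤ (1-r)⁻¹ := by
                have hsummable : Summable (fun i : ℕ => r^i) :=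
                  summable_geometric_of_lt_one hr0.le hr1
                calc ∑ i ∈ Finset.range mz, r^i ≤ ∑' i, r^i :=
                      hsummable.sum_le_tsum _ (fun i _ => by positivity)
                  _ = (1-r)⁻¹ := tsum_geometric_of_lt_one hr0.le hr1
              have hpos : (0:ℝ) ≤ 8 * (2:ℝ)^(-((1-α)*(n:ℝ))) * r := by positivity
              exact mul_le_mul_of_nonneg_left hg hpos
      have hz_end : q (n + mz) = z := by
        simp only [hq, if_pos (by omega : mz ≤ n + mz)]
      refine ⟨q n, hqmem n, hqdist n, ?_⟩
      have := hsum mz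
      rw [hz_end] at this
      exact this.trans hgeom
    obtain ⟨wx, hwxB, hwxd, hwx⟩ := hchain x hxD
    obtain ⟨wy, hwyB, hwyd, hwy⟩ := hchain y hyD
    have h2n : (2:ℝ)^(1-(n:ℤ)) = 2 * (2:ℝ)^(-(n:ℤ)) := by
      rw [zpow_sub₀ (two_ne_zero (α := ℝ)), zpow_one, div_eq_mul_inv, zpow_neg]
    have htopd : dist wx wy ≤ 4 * (2:ℝ)^(-(n:ℤ)) := by
      have h1 : dist wx wy ≤ dist wx x + dist x y + dist y wy := dist_triangle4 _ _ _ _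
      rw [dist_comm wx x] at h1
      rw [h2n] at hxy
      have hpow : (0:ℝ) < (2:ℝ)^(-(n:ℤ)) := by positivity
      linarith [hwxd, hwyd, hxy.le]
    have htop : |G wx ω - G wy ω| ≤ τ n := hgood n le_rfl wx hwxB wy hwyB htopd
    have htri : |G x ω - G y ω| ≤
        |G x ω - G wx ω| + |G wx ω - G wy ω| + |G wy ω - G y ω| := by
      have h1 := abs_sub_le (G x ω) (G wx ω) (G y ω)
      have h2 := abs_sub_le (G wx ω) (G wy ω) (G y ω)
      linarith
    have habs : |G wy ω - G y ω| = |G y ω - G wy ω| := abs_sub_comm _ _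
    have hp : (0:ℝ) < (2:ℝ)^(-((1-α)*(n:ℝ))) := by positivity
    have hτn : τ n = 8 * (2:ℝ)^(-((1-α)*(n:ℝ))) := rfl
    have key : 16*r*(1-r)⁻¹ + 8 ≤ 24*(1-r)⁻¹ := by
      rw [← sub_nonneg]
      have heq : 24*(1-r)⁻¹ - (16*r*(1-r)⁻¹ + 8) = (16 - 8*r)*(1-r)⁻¹ := by
        field_simp
        ring
      rw [heq]
      exact mul_nonneg (by linarith) (by positivity)
    have hfinal : |G x ω - G y ω| ≤ 24/(1-r) * (2:ℝ)^(-((1-α)*(n:ℝ))) := by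
      rw [div_eq_mul_inv]
      have := mul_le_mul_of_nonneg_right key hp.le
      rw [hτn] at htop
      nlinarith [hwx, hwy, htop, htri, habs]
    exact absurd hbig (not_lt.mpr hfinal)
  -- Step 2 : probability of each event
  have hprob : ∀ j : ℕ, P (E j) ≤
      (((n + j : ℕ) + 1 : ℝ≥0∞) ^ 2) * ((N (n+j) : ℝ≥0∞)) ^ 2 *
        ENNReal.ofReal (Real.exp (-(2 : ℝ) ^ (2 * α * (((n + j : ℕ) : ℝ) - 3)))) := by
    intro j
    set K := n + j with hK
    set bound : ℝ≥0∞ := ENNReal.ofReal (Real.exp (-(2 : ℝ) ^ (2 * α * ((K : ℝ) - 3))))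
      with hbound
    have hS : ∀ a b : F, P (Sev a b K) ≤ bound := by
      intro a b
      by_cases hd : dist a b ≤ 4 * (2:ℝ)^(-(K:ℤ))
      · have hsub : Sev a b K ⊆ (fun ω => G a ω - G b ω) ⁻¹' {u | τ K < |u|} :=
          fun ω hω => hω.2
        calc P (Sev a b K) ≤ P ((fun ω => G a ω - G b ω) ⁻¹' {u | τ K < |u|}) :=
              measure_mono hsub
          _ = Measure.map (fun ω => G a ω - G b ω) P {u | τ K < |u|} :=
              (Measure.map_apply_of_aemeasurable (hAE a b)
                (measurableSet_lt measurable_const measurable_id.abs)).symm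
          _ = gaussianReal 0 ((dist a b ^ 2).toNNReal) {u | τ K < |u|} := by rw [hmap a b]
          _ ≤ ENNReal.ofReal (2 * Real.exp (-(τ K ^ 2) / (2 * (4 * (2:ℝ)^(-(K:ℤ)))^2))) := by
              refine gauss_tail _ (hτpos K) (by positivity) ?_
              rw [Real.coe_toNNReal _ (sq_nonneg _)]
              exact pow_le_pow_left₀ dist_nonneg hd 2
          _ ≤ bound := by
              rw [hbound]
              refine ENNReal.ofReal_le_ofReal ?_
              simpa [hτ] using tail_num hα0 hα1 K
      · have hempty : Sev a b K = ∅ :=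
          Set.eq_empty_iff_forall_notMem.mpr fun ω hω => hd hω.1
        simp [hempty]
    have hcard : ((Bf K).card : ℝ≥0∞) ≤ ((K : ℝ≥0∞) + 1) * (N K : ℝ≥0∞) := by
      calc ((Bf K).card : ℝ≥0∞) ≤ (((K+1) * N K : ℕ) : ℝ≥0∞) :=
            Nat.cast_le.mpr (hBcard K)
        _ = ((K : ℝ≥0∞) + 1) * (N K : ℝ≥0∞) := by push_cast; ring
    calc P (E j) ≤ ∑ a ∈ Bf K, P (⋃ b ∈ Bf K, Sev a b K) := measure_biUnion_finset_le _ _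
      _ ≤ ∑ a ∈ Bf K, ∑ b ∈ Bf K, P (Sev a b K) :=
          Finset.sum_le_sum fun a _ => measure_biUnion_finset_le _ _
      _ ≤ ∑ _a ∈ Bf K, ∑ _b ∈ Bf K, bound :=
          Finset.sum_le_sum fun a _ => Finset.sum_le_sum fun b _ => hS a b
      _ = ((Bf K).card : ℝ≥0∞) * (((Bf K).card : ℝ≥0∞) * bound) := by
          simp [Finset.sum_const, nsmul_eq_mul, mul_assoc]
      _ ≤ (((K : ℝ≥0∞) + 1) * (N K : ℝ≥0∞)) * ((((K : ℝ≥0∞) + 1) * (N K : ℝ≥0∞)) * bound) := by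
          gcongr
      _ = ((K : ℝ≥0∞) + 1) ^ 2 * (N K : ℝ≥0∞) ^ 2 * bound := by ring
  calc P _ ≤ P (⋃ j, E j) := measure_mono hincl
    _ ≤ ∑' j, P (E j) := measure_iUnion_le E
    _ ≤ _ := ENNReal.tsum_le_tsum fun j => hprob j
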